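/- Let G be a connected k-uniform hypergraph with at least two edges, a pendant edge e = {w_1,...,w_k} at w_k, and vertex-disjoint connected k-uniform hypergraphs H_1,...,H_{k−1} with roots v_i ∈ V(H_i). Suppose |E(H_j)| ≥ 1 for some j. For 0 ≤ s ≤ k−1, let G_{e,s}(H_1,...,H_{k−1}) be the hypergraph obtained by identifying v_i with w_i for s+1 ≤ i ≤ k−1 and identifying v_i with w_k for 1 ≤ i ≤ s. Then for every s with j ≤ s ≤ k−1, σ(G_{e,0}(H_1,...,H_{k−1})) > σ(G_{e,s}(H_1,...,H_{k−1})). -/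

import Mathlib

open Finset

/-- A (finite) hypergraph: a finite vertex set together with a finite family of edges,
each edge being a finite set of vertices. -/
structure KHypergraph (α : Type) where
  verts : Finset α
  edges : Finset (Finset α)

namespace KHypergraph

variable {α β : Type}

/-- Every edge is a subset of the vertex set. -/
def Good (G : KHypergraph α) : Prop := ∀ e ∈ G.edges, e ⊆ G.verts

/-- `k`-uniform: every edge has cardinality `k`. -/
def Uniform (G : KHypergraph α) (k : ℕ) : Prop := ∀ e ∈ G.edges, e.card = k

/-- A walk of length `p` from `u` to `v`: an alternating sequence of vertices and edges,
with consecutive vertices distinct and both lying in the connecting edge. -/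
inductive Walk (G : KHypergraph α) : α → α → ℕ → Prop
  | nil (v : α) : Walk G v v 0
  | cons {u w : α} (v : α) {p : ℕ} (e : Finset α) (he : e ∈ G.edges)
      (hu : u ∈ e) (hv : v ∈ e) (hne : u ≠ v) (hw : Walk G v w p) :
      Walk G u w (p + 1)

def Connected (G : KHypergraph α) : Prop :=
  ∀ u ∈ G.verts, ∀ v ∈ G.verts, ∃ p, G.Walk u v p

/-- Distance: length of a shortest walk (equivalently, of a shortest path). -/
noncomputable def dist (G : KHypergraph α) (u v : α) : ℕ := sInf {p | G.Walk u v p}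

/-- `σ_G(u) = ∑_{v ∈ V(G)} d_G(u,v)`. -/
noncomputable def transFrom [DecidableEq α] (G : KHypergraph α) (u : α) : ℕ :=
  ∑ v ∈ G.verts, G.dist u v

/-- The transmission `σ(G)`: the sum of distances over all unordered pairs of
distinct vertices (distances being symmetric, this is half the sum over ordered pairs). -/
noncomputable def trans [DecidableEq α] (G : KHypergraph α) : ℕ :=
  (∑ u ∈ G.verts, ∑ v ∈ G.verts, G.dist u v) / 2

/-- `σ_G(A,B) = ∑_{a ∈ A, b ∈ B} d_G(a,b)`. -/
noncomputable def transBetween [DecidableEq α] (G : KHypergraph α) (A B : Finset α) : ℕ :=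
  ∑ a ∈ A, ∑ b ∈ B, G.dist a b

/-- The diameter: the maximum distance between two vertices. -/
noncomputable def diam (G : KHypergraph α) : ℕ :=
  G.verts.sup fun u => G.verts.sup fun v => G.dist u v

/-- The degree of a vertex: the number of edges containing it. -/
def degree [DecidableEq α] (G : KHypergraph α) (v : α) : ℕ :=
  (G.edges.filter fun e => v ∈ e).card

/-- A cycle of length `n+2` in `G`: vertices `v 0, …, v (n+1)` (all distinct) and
distinct edges `e 0, …, e (n+1)` of `G` with `v i, v (i+1) ∈ e i` (indices mod `n+2`). -/
structure Cycle (G : KHypergraph α) where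
  n : ℕ
  v : Fin (n + 2) → α
  e : Fin (n + 2) → Finset α
  he : ∀ i, e i ∈ G.edges
  einj : Function.Injective e
  vinj : Function.Injective v
  mem_fst : ∀ i, v i ∈ e i
  mem_snd : ∀ i, v (i + 1) ∈ e i

/-- The length of a cycle (its number of edges). -/
def Cycle.length {G : KHypergraph α} (C : G.Cycle) : ℕ := C.n + 2

/-- The set of edges of a cycle. -/
def Cycle.edgeFinset [DecidableEq α] {G : KHypergraph α} (C : G.Cycle) : Finset (Finset α) :=
  Finset.univ.image C.e

/-- Unicyclic: connected with exactly one cycle (all cycles have the same edge set). -/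
def Unicyclic [DecidableEq α] (G : KHypergraph α) : Prop :=
  G.Connected ∧ Nonempty G.Cycle ∧ ∀ C C' : G.Cycle, C.edgeFinset = C'.edgeFinset

/-- Isomorphism of hypergraphs. -/
def Isomorphic [DecidableEq β] (G : KHypergraph α) (H : KHypergraph β) : Prop :=
  ∃ f : α → β, Set.BijOn f ↑G.verts ↑H.verts ∧
    ∀ e : Finset α, e ⊆ G.verts → (e ∈ G.edges ↔ e.image f ∈ H.edges)

/-- Rename the vertices of a hypergraph along `f`. -/
def mapHG [DecidableEq β] (f : α → β) (G : KHypergraph α) : KHypergraph β :=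
  ⟨G.verts.image f, G.edges.image (Finset.image f)⟩

def unionHG [DecidableEq α] (G H : KHypergraph α) : KHypergraph α :=
  ⟨G.verts ∪ H.verts, G.edges ∪ H.edges⟩

def unionMany [DecidableEq α] {n : ℕ} (Hs : Fin n → KHypergraph α) : KHypergraph α :=
  ⟨Finset.univ.biUnion fun i => (Hs i).verts, Finset.univ.biUnion fun i => (Hs i).edges⟩

/-- Move the edge `e` from `u` to `x`: replace `e` by `(e \ {u}) ∪ {x}`. -/
def moveEdge [DecidableEq α] (G : KHypergraph α) (e : Finset α) (u x : α) : KHypergraph α :=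
  ⟨G.verts, insert (insert x (e.erase u)) (G.edges.erase e)⟩

/-- Move each edge of `S` from `u` to `x`. -/
def moveEdges [DecidableEq α] (G : KHypergraph α) (S : Finset (Finset α)) (u x : α) :
    KHypergraph α :=
  ⟨G.verts, (G.edges \ S) ∪ S.image fun e => insert x (e.erase u)⟩

/-- Delete a set of edges (keeping all vertices). -/
def deleteEdges [DecidableEq α] (G : KHypergraph α) (S : Finset (Finset α)) : KHypergraph α :=
  ⟨G.verts, G.edges \ S⟩

open Classical in
/-- The vertex set of the component of `G` containing `u`. -/
noncomputable def component (G : KHypergraph α) (u : α) : Finset α :=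
  G.verts.filter fun x => ∃ p, G.Walk u x p

/-- The component of `G` containing `u`, as a hypergraph. -/
noncomputable def componentHG [DecidableEq α] (G : KHypergraph α) (u : α) : KHypergraph α :=
  ⟨G.component u, G.edges.filter fun e => e ⊆ G.component u⟩

/-- The `k`-uniform loose cycle with `m` edges `e_0, …, e_{m-1}`,
consecutive edges sharing exactly one vertex. -/
def looseCycle (m k : ℕ) : KHypergraph ℕ where
  verts := Finset.range (m * (k - 1))
  edges := (Finset.range m).image fun i =>
    (Finset.range k).image fun j => (i * (k - 1) + j) % (m * (k - 1))

/-- `C^k_2(t,s)`: two `k`-edges sharing exactly the two vertices `0,1`, with a hyperstar of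
`t` edges attached at `0` and a hyperstar of `s` edges attached at `1`. -/
def Ck2 (k t s : ℕ) : KHypergraph ℕ where
  verts := Finset.range ((t + s + 2) * (k - 1))
  edges :=
    {Finset.range k, insert 0 (insert 1 (Finset.Ico k (2 * k - 2)))} ∪
    ((Finset.range t).image fun i =>
      insert 0 (Finset.Ico (2 * k - 2 + i * (k - 1)) (2 * k - 2 + (i + 1) * (k - 1)))) ∪
    ((Finset.range s).image fun j =>
      insert 1 (Finset.Ico (2 * k - 2 + t * (k - 1) + j * (k - 1))
        (2 * k - 2 + t * (k - 1) + (j + 1) * (k - 1))))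

/-- `C̃^k_2(p,q)`: the loose 2-cycle on the two `k`-edges `{0,…,k-1}` and
`{0,1} ∪ {k,…,2k-3}` (sharing exactly `0,1`), with a pendant path of length `p`
attached at the degree-one vertex `2` of the first edge and a pendant path of length `q`
attached at the degree-one vertex `k` of the second edge. -/
def Ctilde (k p q : ℕ) : KHypergraph ℕ where
  verts := Finset.range ((p + q + 2) * (k - 1))
  edges :=
    {Finset.range k, insert 0 (insert 1 (Finset.Ico k (2 * k - 2)))} ∪
    ((Finset.range p).image fun i =>
      insert (if i = 0 then 2 else 2 * k - 2 + i * (k - 1) - 1)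
        (Finset.Ico (2 * k - 2 + i * (k - 1)) (2 * k - 2 + (i + 1) * (k - 1)))) ∪
    ((Finset.range q).image fun j =>
      insert (if j = 0 then k else 2 * k - 2 + p * (k - 1) + j * (k - 1) - 1)
        (Finset.Ico (2 * k - 2 + p * (k - 1) + j * (k - 1))
          (2 * k - 2 + p * (k - 1) + (j + 1) * (k - 1))))

/-- The triangle with one pendant edge, `C^2_3(1,0,0)`. -/
def triPendant : KHypergraph ℕ :=
  ⟨Finset.range 4, {{0, 1}, {1, 2}, {0, 2}, {0, 3}}⟩

/-- `G_{u,v}(p,q)`: attach a loose pendant path of `p` `k`-edges at `u` and a loose pendant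
path of `q` `k`-edges at `v`, using fresh vertices (the `Sum.inr` side). -/
def attachTwoPathsAt [DecidableEq α] (k : ℕ) (G : KHypergraph α) (u v : α) (p q : ℕ) :
    KHypergraph (α ⊕ ℕ) where
  verts := G.verts.image Sum.inl ∪ (Finset.range ((p + q) * (k - 1))).image Sum.inr
  edges :=
    G.edges.image (Finset.image Sum.inl) ∪
    ((Finset.range p).image fun i =>
      insert (if i = 0 then Sum.inl u else Sum.inr (i * (k - 1) - 1))
        ((Finset.Ico (i * (k - 1)) ((i + 1) * (k - 1))).image Sum.inr)) ∪
    ((Finset.range q).image fun j =>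
      insert (if j = 0 then Sum.inl v else Sum.inr (p * (k - 1) + j * (k - 1) - 1))
        ((Finset.Ico (p * (k - 1) + j * (k - 1)) (p * (k - 1) + (j + 1) * (k - 1))).image
          Sum.inr))

/-- `G_u(p,q)`: attach two loose pendant paths, of lengths `p` and `q`, at `u`. -/
def attachTwoPaths [DecidableEq α] (k : ℕ) (G : KHypergraph α) (u : α) (p q : ℕ) :
    KHypergraph (α ⊕ ℕ) :=
  attachTwoPathsAt k G u u p q

/-- `G_{e,s}(H_1,…,H_{k-1})`: given a pendant edge `e = {w 0, …, w (k-1)}` of `G` at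
`w (k-1)`, identify the root `vr i` of `H i` with `w (k-1)` for (0-based) `i < s`, and with
`w i` for `i ≥ s`. -/
def Ges [DecidableEq α] (G : KHypergraph α) (k : ℕ) (hk : 2 ≤ k) (w : Fin k → α)
    (H : Fin (k - 1) → KHypergraph α) (vr : Fin (k - 1) → α) (s : ℕ) : KHypergraph α :=
  unionHG G (unionMany fun i : Fin (k - 1) =>
    mapHG (Function.update id (vr i)
      (if (i : ℕ) < s then w ⟨k - 1, by omega⟩ else w (Fin.castLE (Nat.sub_le k 1) i))) (H i))

end KHypergraph

open KHypergraph
namespace HGAux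
open KHypergraph

set_option linter.unusedSectionVars false

variable {α : Type} [DecidableEq α]

theorem walk_append {G : KHypergraph α} {u v x : α} {p q : ℕ}
    (h1 : G.Walk u v p) (h2 : G.Walk v x q) : G.Walk u x (p + q) := by
  induction h1 with
  | nil => simpa using h2
  | cons v e he hu hv hne hw ih =>
    have := Walk.cons v e he hu hv hne (ih h2)
    convert this using 1
    omega

theorem walk_single {G : KHypergraph α} {u v : α} {e : Finset α} (he : e ∈ G.edges)
    (hu : u ∈ e) (hv : v ∈ e) (hne : u ≠ v) : G.Walk u v 1 :=
  Walk.cons v e he hu hv hne (Walk.nil v)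

theorem walk_reverse {G : KHypergraph α} {u v : α} {p : ℕ}
    (h : G.Walk u v p) : G.Walk v u p := by
  induction h with
  | nil => exact Walk.nil _
  | cons v e he hu hv hne hw ih =>
    exact walk_append ih (walk_single he hv hu hne.symm)

theorem dist_le {G : KHypergraph α} {u v : α} {p : ℕ} (h : G.Walk u v p) :
    G.dist u v ≤ p := Nat.sInf_le h

theorem walk_of_nonempty {G : KHypergraph α} {u v : α} (h : ∃ p, G.Walk u v p) :
    G.Walk u v (G.dist u v) := Nat.sInf_mem h

theorem dist_self (G : KHypergraph α) (u : α) : G.dist u u = 0 :=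
  Nat.le_zero.mp (dist_le (Walk.nil u))

theorem walk_zero {G : KHypergraph α} {u v : α} (h : G.Walk u v 0) : u = v := by
  cases h; rfl

theorem dist_symm {G : KHypergraph α} (hconn : G.Connected) {u v : α}
    (hu : u ∈ G.verts) (hv : v ∈ G.verts) : G.dist u v = G.dist v u := by
  have h1 := walk_of_nonempty (hconn u hu v hv)
  have h2 := walk_of_nonempty (hconn v hv u hu)
  exact le_antisymm (dist_le (walk_reverse h2)) (dist_le (walk_reverse h1))

theorem dist_triangle {G : KHypergraph α} (hconn : G.Connected) {u v x : α}
    (hu : u ∈ G.verts) (hv : v ∈ G.verts) (hx : x ∈ G.verts) :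
    G.dist u x ≤ G.dist u v + G.dist v x :=
  dist_le (walk_append (walk_of_nonempty (hconn u hu v hv))
    (walk_of_nonempty (hconn v hv x hx)))

/-- distance is 1-Lipschitz along an edge. -/
theorem dist_lip {G : KHypergraph α} (hconn : G.Connected) (hgood : G.Good)
    {e : Finset α} (he : e ∈ G.edges) {a b z : α} (ha : a ∈ e) (hb : b ∈ e)
    (hz : z ∈ G.verts) : G.dist a z ≤ G.dist b z + 1 := by
  rcases eq_or_ne a b with rfl | hne
  · omega
  · have hw := walk_of_nonempty (hconn b (hgood e he hb) z hz)
    have : G.Walk a z (G.dist b z + 1) := Walk.cons b e he ha hb hne hw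
    exact dist_le this

theorem dist_eq_one {G : KHypergraph α} (hconn : G.Connected) (hgood : G.Good)
    {e : Finset α} (he : e ∈ G.edges) {a b : α} (ha : a ∈ e) (hb : b ∈ e)
    (hne : a ≠ b) : G.dist a b = 1 := by
  have h1 : G.dist a b ≤ 1 := dist_le (walk_single he ha hb hne)
  have h0 : G.dist a b ≠ 0 := by
    intro h
    have := walk_of_nonempty (hconn a (hgood e he ha) b (hgood e he hb))
    rw [h] at this
    exact hne (walk_zero this)
  omega

/-- Lower bound via a potential function. -/
theorem potential {G : KHypergraph α} {φ : α → ℕ}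
    (hφ : ∀ e ∈ G.edges, ∀ a ∈ e, ∀ b ∈ e, φ a ≤ φ b + 1)
    {u v : α} {p : ℕ} (h : G.Walk u v p) : φ u ≤ φ v + p := by
  induction h with
  | nil => omega
  | cons v e he hu hv hne hw ih =>
    have := hφ e he _ hu _ hv
    omega

/-- Map a walk along an injective-on-vertices edge-preserving map. -/
theorem walk_map {Hh U : KHypergraph α} {g : α → α} (hgoodH : Hh.Good)
    (hmap : ∀ f ∈ Hh.edges, f.image g ∈ U.edges)
    (hinj : ∀ x ∈ Hh.verts, ∀ y ∈ Hh.verts, g x = g y → x = y)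
    {a b : α} {p : ℕ} (h : Hh.Walk a b p) : U.Walk (g a) (g b) p := by
  induction h with
  | nil => exact Walk.nil _
  | cons v f hf hu hv hne hw ih =>
    exact Walk.cons (g v) (f.image g) (hmap f hf)
      (Finset.mem_image_of_mem g hu) (Finset.mem_image_of_mem g hv)
      (fun hh => hne (hinj _ (hgoodH f hf hu) _ (hgoodH f hf hv) hh)) ih

theorem walk_mono {G U : KHypergraph α} (hsub : G.edges ⊆ U.edges)
    {a b : α} {p : ℕ} (h : G.Walk a b p) : U.Walk a b p := by
  induction h with
  | nil => exact Walk.nil _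
  | cons v f hf hu hv hne hw ih => exact Walk.cons v f (hsub hf) hu hv hne ih

end HGAux
namespace HGAux
open KHypergraph

set_option linter.unusedSectionVars false

section Setup

variable {α : Type} [DecidableEq α] {k : ℕ}
variable (G : KHypergraph α) (H : Fin (k-1) → KHypergraph α) (vr t : Fin (k-1) → α)

/-- vertices of `H i` other than the root -/
def Hp (i : Fin (k-1)) : Finset α := (H i).verts.erase (vr i)

/-- the identification map -/
def upd (i : Fin (k-1)) : α → α := Function.update id (vr i) (t i)

/-- the glued hypergraph -/
def UU : KHypergraph α :=
  unionHG G (unionMany fun i : Fin (k-1) => mapHG (upd vr t i) (H i))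

/-- the common vertex set -/
def VV : Finset α := G.verts ∪ Finset.univ.biUnion (Hp H vr)

variable {G H vr t}

theorem djn {s u : Finset α} (h : Disjoint s u) {x y : α} (hx : x ∈ s) (hy : y ∈ u) :
    x ≠ y := fun he => Finset.disjoint_left.mp h hx (he ▸ hy)

theorem mem_Hp {u : α} {i : Fin (k-1)} :
    u ∈ Hp H vr i ↔ u ≠ vr i ∧ u ∈ (H i).verts := Finset.mem_erase

theorem Hp_unique (hdisj2 : ∀ i j : Fin (k-1), i ≠ j → Disjoint (H i).verts (H j).verts)
    {u : α} {i m : Fin (k-1)} (hi : u ∈ Hp H vr i) (hm : u ∈ Hp H vr m) : i = m := by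
  by_contra hne
  exact djn (hdisj2 i m hne) (mem_Hp.mp hi).2 (mem_Hp.mp hm).2 rfl

theorem not_mem_Hp (hdisj1 : ∀ i, Disjoint (H i).verts G.verts)
    {u : α} (hu : u ∈ G.verts) (i : Fin (k-1)) : u ∉ Hp H vr i := fun h =>
  djn (hdisj1 i) (mem_Hp.mp h).2 hu rfl

theorem idx_eq (hdisj2 : ∀ i j : Fin (k-1), i ≠ j → Disjoint (H i).verts (H j).verts)
    {u : α} (h : ∃ i, u ∈ Hp H vr i) {i : Fin (k-1)} (hu : u ∈ Hp H vr i) :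
    h.choose = i := Hp_unique hdisj2 h.choose_spec hu

theorem upd_apply (i : Fin (k-1)) (x : α) :
    upd vr t i x = if x = vr i then t i else x := by
  simp [upd, Function.update_apply]

theorem upd_root (i : Fin (k-1)) : upd vr t i (vr i) = t i := by simp [upd_apply]

theorem upd_fix {i : Fin (k-1)} {x : α} (hx : x ≠ vr i) : upd vr t i x = x := by
  simp [upd_apply, hx]

theorem mem_edges_UU {f : Finset α} :
    f ∈ (UU G H vr t).edges ↔
      f ∈ G.edges ∨ ∃ i, ∃ g ∈ (H i).edges, f = g.image (upd vr t i) := by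
  simp only [UU, unionHG, unionMany, mapHG, Finset.mem_union, Finset.mem_biUnion,
    Finset.mem_univ, true_and, Finset.mem_image]
  constructor
  · rintro (h | ⟨i, g, hg, rfl⟩)
    · exact Or.inl h
    · exact Or.inr ⟨i, g, hg, rfl⟩
  · rintro (h | ⟨i, g, hg, rfl⟩)
    · exact Or.inl h
    · exact Or.inr ⟨i, g, hg, rfl⟩

/-- every element of a mapped edge is either `t i` or a non-root vertex of `H i` -/
theorem mem_image_upd_cases (hdisj1 : ∀ i, Disjoint (H i).verts G.verts)
    (ht : ∀ i, t i ∈ G.verts) {i : Fin (k-1)} {g : Finset α}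
    (hg : g ⊆ (H i).verts) {a : α} (ha : a ∈ g.image (upd vr t i)) :
    a = t i ∨ a ∈ Hp H vr i := by
  rcases Finset.mem_image.mp ha with ⟨c, hc, rfl⟩
  rcases eq_or_ne c (vr i) with rfl | hne
  · exact Or.inl (upd_root i)
  · rw [upd_fix hne]
    exact Or.inr (mem_Hp.mpr ⟨hne, hg hc⟩)

/-- if `t i` appears in a mapped edge then the root is in the original edge -/
theorem root_mem_of_t_mem (hdisj1 : ∀ i, Disjoint (H i).verts G.verts)
    (ht : ∀ i, t i ∈ G.verts) {i : Fin (k-1)} {g : Finset α}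
    (hg : g ⊆ (H i).verts) (hti : t i ∈ g.image (upd vr t i)) : vr i ∈ g := by
  rcases Finset.mem_image.mp hti with ⟨c, hc, hcu⟩
  rcases eq_or_ne c (vr i) with rfl | hne
  · exact hc
  · rw [upd_fix hne] at hcu
    exact absurd rfl (djn (hdisj1 i) (hg hc) (hcu ▸ ht i))

theorem verts_UU (hroot : ∀ i, vr i ∈ (H i).verts) (ht : ∀ i, t i ∈ G.verts) :
    (UU G H vr t).verts = VV G H vr := by
  ext u
  simp only [UU, unionHG, unionMany, mapHG, VV, Finset.mem_union, Finset.mem_biUnion,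
    Finset.mem_univ, true_and, Finset.mem_image]
  constructor
  · rintro (h | ⟨i, x, hx, rfl⟩)
    · exact Or.inl h
    · rcases eq_or_ne x (vr i) with rfl | hne
      · rw [upd_root]; exact Or.inl (ht i)
      · rw [upd_fix hne]; exact Or.inr ⟨i, mem_Hp.mpr ⟨hne, hx⟩⟩
  · rintro (h | ⟨i, hu⟩)
    · exact Or.inl h
    · exact Or.inr ⟨i, u, (mem_Hp.mp hu).2, upd_fix (mem_Hp.mp hu).1⟩

theorem G_edges_sub : G.edges ⊆ (UU G H vr t).edges := fun f hf =>
  mem_edges_UU.mpr (Or.inl hf)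

theorem mapped_edge_mem {i : Fin (k-1)} {g : Finset α} (hg : g ∈ (H i).edges) :
    g.image (upd vr t i) ∈ (UU G H vr t).edges :=
  mem_edges_UU.mpr (Or.inr ⟨i, g, hg, rfl⟩)

theorem upd_inj (hdisj1 : ∀ i, Disjoint (H i).verts G.verts) (ht : ∀ i, t i ∈ G.verts)
    {i : Fin (k-1)} {x y : α} (hx : x ∈ (H i).verts) (hy : y ∈ (H i).verts)
    (h : upd vr t i x = upd vr t i y) : x = y := by
  rcases eq_or_ne x (vr i) with rfl | hnx <;> rcases eq_or_ne y (vr i) with rfl | hny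
  · rfl
  · rw [upd_root, upd_fix hny] at h
    exact absurd h.symm (djn (hdisj1 i) hy (ht i))
  · rw [upd_root, upd_fix hnx] at h
    exact absurd h (djn (hdisj1 i) hx (ht i))
  · rwa [upd_fix hnx, upd_fix hny] at h

open Classical in
/-- the claimed distance function in `UU` -/
noncomputable def cd (G : KHypergraph α) (H : Fin (k-1) → KHypergraph α)
    (vr t : Fin (k-1) → α) (u v : α) : ℕ :=
  if hu : ∃ i, u ∈ Hp H vr i then
    if hv : ∃ i, v ∈ Hp H vr i then
      if hu.choose = hv.choose then (H hu.choose).dist u v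
      else (H hu.choose).dist u (vr hu.choose) + G.dist (t hu.choose) (t hv.choose)
            + (H hv.choose).dist v (vr hv.choose)
    else (H hu.choose).dist u (vr hu.choose) + G.dist (t hu.choose) v
  else if hv : ∃ i, v ∈ Hp H vr i then
    G.dist u (t hv.choose) + (H hv.choose).dist v (vr hv.choose)
  else G.dist u v

variable (hdisj1 : ∀ i, Disjoint (H i).verts G.verts)
  (hdisj2 : ∀ i j : Fin (k-1), i ≠ j → Disjoint (H i).verts (H j).verts)

include hdisj1 in
theorem cd_GG {u v : α} (hu : u ∈ G.verts) (hv : v ∈ G.verts) :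
    cd G H vr t u v = G.dist u v := by
  rw [cd, dif_neg (by push_neg; exact not_mem_Hp hdisj1 hu),
    dif_neg (by push_neg; exact not_mem_Hp hdisj1 hv)]

include hdisj1 hdisj2 in
theorem cd_HG {u v : α} {i : Fin (k-1)} (hu : u ∈ Hp H vr i) (hv : v ∈ G.verts) :
    cd G H vr t u v = (H i).dist u (vr i) + G.dist (t i) v := by
  have h1 : ∃ i, u ∈ Hp H vr i := ⟨i, hu⟩
  rw [cd, dif_pos h1, dif_neg (by push_neg; exact not_mem_Hp hdisj1 hv),
    idx_eq hdisj2 h1 hu]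

include hdisj1 hdisj2 in
theorem cd_GH {u v : α} {i : Fin (k-1)} (hu : u ∈ G.verts) (hv : v ∈ Hp H vr i) :
    cd G H vr t u v = G.dist u (t i) + (H i).dist v (vr i) := by
  have h1 : ∃ i, v ∈ Hp H vr i := ⟨i, hv⟩
  rw [cd, dif_neg (by push_neg; exact not_mem_Hp hdisj1 hu), dif_pos h1,
    idx_eq hdisj2 h1 hv]

include hdisj2 in
theorem cd_HH_same {u v : α} {i : Fin (k-1)} (hu : u ∈ Hp H vr i) (hv : v ∈ Hp H vr i) :
    cd G H vr t u v = (H i).dist u v := by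
  have h1 : ∃ i, u ∈ Hp H vr i := ⟨i, hu⟩
  have h2 : ∃ i, v ∈ Hp H vr i := ⟨i, hv⟩
  rw [cd, dif_pos h1, dif_pos h2,
    if_pos (by rw [idx_eq hdisj2 h1 hu, idx_eq hdisj2 h2 hv]), idx_eq hdisj2 h1 hu]

include hdisj2 in
theorem cd_HH_ne {u v : α} {i m : Fin (k-1)} (him : i ≠ m)
    (hu : u ∈ Hp H vr i) (hv : v ∈ Hp H vr m) :
    cd G H vr t u v = (H i).dist u (vr i) + G.dist (t i) (t m) + (H m).dist v (vr m) := by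
  have h1 : ∃ i, u ∈ Hp H vr i := ⟨i, hu⟩
  have h2 : ∃ i, v ∈ Hp H vr i := ⟨m, hv⟩
  rw [cd, dif_pos h1, dif_pos h2,
    if_neg (by rw [idx_eq hdisj2 h1 hu, idx_eq hdisj2 h2 hv]; exact him),
    idx_eq hdisj2 h1 hu, idx_eq hdisj2 h2 hv]

end Setup
end HGAux
namespace HGAux
open KHypergraph

set_option linter.unusedSectionVars false
set_option maxHeartbeats 1000000

section Dist

variable {α : Type} [DecidableEq α] {k : ℕ}
variable {G : KHypergraph α} {H : Fin (k-1) → KHypergraph α} {vr t : Fin (k-1) → α}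
variable (hgood : G.Good) (hconn : G.Connected)
  (hH : ∀ i, (H i).Good ∧ (H i).Connected ∧ (H i).Uniform k ∧ vr i ∈ (H i).verts)
  (hdisj1 : ∀ i, Disjoint (H i).verts G.verts)
  (hdisj2 : ∀ i j : Fin (k-1), i ≠ j → Disjoint (H i).verts (H j).verts)
  (ht : ∀ i, t i ∈ G.verts)

include hconn in
theorem wG {a b : α} (ha : a ∈ G.verts) (hb : b ∈ G.verts) :
    (UU G H vr t).Walk a b (G.dist a b) :=
  walk_mono G_edges_sub (walk_of_nonempty (hconn a ha b hb))

include hH hdisj1 ht in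
theorem wH {i : Fin (k-1)} {a b : α} (ha : a ∈ (H i).verts) (hb : b ∈ (H i).verts) :
    (UU G H vr t).Walk (upd vr t i a) (upd vr t i b) ((H i).dist a b) :=
  walk_map (hH i).1 (fun _ hf => mapped_edge_mem hf)
    (fun _ hx _ hy => upd_inj hdisj1 ht hx hy)
    (walk_of_nonempty ((hH i).2.1 a ha b hb))

include hconn hH hdisj1 ht in
/-- walk from a non-root `H i` vertex to its attachment point -/
theorem wHout {i : Fin (k-1)} {a : α} (ha : a ∈ Hp H vr i) :
    (UU G H vr t).Walk a (t i) ((H i).dist a (vr i)) := by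
  have := wH (vr := vr) (t := t) hH hdisj1 ht (mem_Hp.mp ha).2 (hH i).2.2.2
  rwa [upd_fix (mem_Hp.mp ha).1, upd_root] at this

include hconn hH hdisj1 ht in
theorem wHin {i : Fin (k-1)} {a : α} (ha : a ∈ Hp H vr i) :
    (UU G H vr t).Walk (t i) a ((H i).dist a (vr i)) := by
  have h := wHout (vr := vr) (t := t) hconn hH hdisj1 ht ha
  exact walk_reverse h

include hgood hconn hH hdisj1 hdisj2 ht in
theorem walk_cd : ∀ u ∈ VV G H vr, ∀ v ∈ VV G H vr,
    (UU G H vr t).Walk u v (cd G H vr t u v) := by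
  intro u hu v hv
  rcases Finset.mem_union.mp hu with hu | hu
  · rcases Finset.mem_union.mp hv with hv | hv
    · rw [cd_GG hdisj1 hu hv]
      exact wG hconn hu hv
    · rcases Finset.mem_biUnion.mp hv with ⟨i, -, hvi⟩
      rw [cd_GH hdisj1 hdisj2 hu hvi]
      exact walk_append (wG hconn hu (ht i)) (wHin hconn hH hdisj1 ht hvi)
  · rcases Finset.mem_biUnion.mp hu with ⟨i, -, hui⟩
    rcases Finset.mem_union.mp hv with hv | hv
    · rw [cd_HG hdisj1 hdisj2 hui hv]
      exact walk_append (wHout hconn hH hdisj1 ht hui) (wG hconn (ht i) hv)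
    · rcases Finset.mem_biUnion.mp hv with ⟨m, -, hvm⟩
      rcases eq_or_ne i m with rfl | him
      · rw [cd_HH_same hdisj2 hui hvm]
        have := wH (vr := vr) (t := t) hH hdisj1 ht (mem_Hp.mp hui).2 (mem_Hp.mp hvm).2
        rwa [upd_fix (mem_Hp.mp hui).1, upd_fix (mem_Hp.mp hvm).1] at this
      · rw [cd_HH_ne hdisj2 him hui hvm]
        exact walk_append (walk_append (wHout hconn hH hdisj1 ht hui)
          (wG hconn (ht i) (ht m))) (wHin hconn hH hdisj1 ht hvm)

include hgood hconn hH hdisj1 hdisj2 ht in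
/-- the monster: `cd · v` is 1-Lipschitz along edges of `UU` -/
theorem cd_lip {v : α} (hv : v ∈ VV G H vr) :
    ∀ f ∈ (UU G H vr t).edges, ∀ a ∈ f, ∀ b ∈ f, cd G H vr t a v ≤ cd G H vr t b v + 1 := by
  intro f hf a ha b hb
  rcases mem_edges_UU.mp hf with hfG | ⟨i, g, hg, rfl⟩
  · -- edge of G
    have ha' : a ∈ G.verts := hgood f hfG ha
    have hb' : b ∈ G.verts := hgood f hfG hb
    rcases Finset.mem_union.mp hv with hv' | hv'
    · rw [cd_GG hdisj1 ha' hv', cd_GG hdisj1 hb' hv']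
      exact dist_lip hconn hgood hfG ha hb hv'
    · rcases Finset.mem_biUnion.mp hv' with ⟨m, -, hvm⟩
      rw [cd_GH hdisj1 hdisj2 ha' hvm, cd_GH hdisj1 hdisj2 hb' hvm]
      have := dist_lip hconn hgood hfG ha hb (ht m)
      omega
  · -- mapped edge of H i
    have hgsub : g ⊆ (H i).verts := (hH i).1 g hg
    have hiconn := (hH i).2.1
    have higood := (hH i).1
    have hroot := (hH i).2.2.2
    rcases Finset.mem_image.mp ha with ⟨ca, hca, rfl⟩
    rcases Finset.mem_image.mp hb with ⟨cb, hcb, rfl⟩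
    have hcav : ca ∈ (H i).verts := hgsub hca
    have hcbv : cb ∈ (H i).verts := hgsub hcb
    rcases eq_or_ne ca (vr i) with rfl | hnea <;> rcases eq_or_ne cb (vr i) with rfl | hneb
    · exact Nat.le_succ _
    · -- a = t i, b = cb ∈ Hp i
      rw [upd_root, upd_fix hneb]
      have hbHp : cb ∈ Hp H vr i := mem_Hp.mpr ⟨hneb, hcbv⟩
      have hd1 : (H i).dist cb (vr i) ≤ 1 := dist_le (walk_single hg hcb hca hneb)
      rcases Finset.mem_union.mp hv with hv' | hv'
      · rw [cd_GG hdisj1 (ht i) hv', cd_HG hdisj1 hdisj2 hbHp hv']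
        omega
      · rcases Finset.mem_biUnion.mp hv' with ⟨m, -, hvm⟩
        rcases eq_or_ne i m with rfl | him
        · rw [cd_GH hdisj1 hdisj2 (ht i) hvm, cd_HH_same hdisj2 hbHp hvm, dist_self]
          have htri : (H i).dist v (vr i) ≤ (H i).dist v cb + (H i).dist cb (vr i) :=
            dist_triangle hiconn (mem_Hp.mp hvm).2 hcbv hroot
          have hsym : (H i).dist v cb = (H i).dist cb v :=
            dist_symm hiconn (mem_Hp.mp hvm).2 hcbv
          omega
        · rw [cd_GH hdisj1 hdisj2 (ht i) hvm, cd_HH_ne hdisj2 him hbHp hvm]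
          omega
    · -- a = ca ∈ Hp i, b = t i
      rw [upd_fix hnea, upd_root]
      have haHp : ca ∈ Hp H vr i := mem_Hp.mpr ⟨hnea, hcav⟩
      have hd1 : (H i).dist ca (vr i) ≤ 1 := dist_le (walk_single hg hca hcb hnea)
      rcases Finset.mem_union.mp hv with hv' | hv'
      · rw [cd_GG hdisj1 (ht i) hv', cd_HG hdisj1 hdisj2 haHp hv']
        omega
      · rcases Finset.mem_biUnion.mp hv' with ⟨m, -, hvm⟩
        rcases eq_or_ne i m with rfl | him
        · rw [cd_GH hdisj1 hdisj2 (ht i) hvm, cd_HH_same hdisj2 haHp hvm, dist_self]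
          have htri : (H i).dist ca v ≤ (H i).dist ca (vr i) + (H i).dist (vr i) v :=
            dist_triangle hiconn hcav hroot (mem_Hp.mp hvm).2
          have hsym : (H i).dist (vr i) v = (H i).dist v (vr i) :=
            dist_symm hiconn hroot (mem_Hp.mp hvm).2
          omega
        · rw [cd_GH hdisj1 hdisj2 (ht i) hvm, cd_HH_ne hdisj2 him haHp hvm]
          omega
    · -- both in Hp i
      rw [upd_fix hnea, upd_fix hneb]
      have haHp : ca ∈ Hp H vr i := mem_Hp.mpr ⟨hnea, hcav⟩
      have hbHp : cb ∈ Hp H vr i := mem_Hp.mpr ⟨hneb, hcbv⟩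
      rcases Finset.mem_union.mp hv with hv' | hv'
      · rw [cd_HG hdisj1 hdisj2 haHp hv', cd_HG hdisj1 hdisj2 hbHp hv']
        have := dist_lip hiconn higood hg hca hcb hroot
        omega
      · rcases Finset.mem_biUnion.mp hv' with ⟨m, -, hvm⟩
        rcases eq_or_ne i m with rfl | him
        · rw [cd_HH_same hdisj2 haHp hvm, cd_HH_same hdisj2 hbHp hvm]
          exact dist_lip hiconn higood hg hca hcb (mem_Hp.mp hvm).2
        · rw [cd_HH_ne hdisj2 him haHp hvm, cd_HH_ne hdisj2 him hbHp hvm]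
          have := dist_lip hiconn higood hg hca hcb hroot
          omega

include hgood hconn hH hdisj1 hdisj2 ht in
theorem cd_self {u : α} : cd G H vr t u u = 0 := by
  by_cases hu : ∃ i, u ∈ Hp H vr i
  · rcases hu with ⟨i, hui⟩
    rw [cd_HH_same hdisj2 hui hui, dist_self]
  · push_neg at hu
    rw [cd, dif_neg (by push_neg; exact hu), dif_neg (by push_neg; exact hu), dist_self]

include hgood hconn hH hdisj1 hdisj2 ht in
/-- THE distance formula -/
theorem dist_UU : ∀ u ∈ VV G H vr, ∀ v ∈ VV G H vr,
    (UU G H vr t).dist u v = cd G H vr t u v := by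
  intro u hu v hv
  have hw := walk_cd hgood hconn hH hdisj1 hdisj2 ht u hu v hv
  have hle : (UU G H vr t).dist u v ≤ cd G H vr t u v := dist_le hw
  have hwd : (UU G H vr t).Walk u v ((UU G H vr t).dist u v) :=
    walk_of_nonempty ⟨_, hw⟩
  have hge := potential (φ := fun z => cd G H vr t z v)
    (fun f hf a haf b hbf => cd_lip hgood hconn hH hdisj1 hdisj2 ht hv f hf a haf b hbf) hwd
  have h0 : cd G H vr t v v = 0 := cd_self hgood hconn hH hdisj1 hdisj2 ht
  simp only [h0, Nat.zero_add] at hge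
  omega

end Dist
end HGAux
namespace HGAux
open KHypergraph

set_option linter.unusedSectionVars false

section Rho

variable {α : Type} [DecidableEq α] {k : ℕ}
variable {H : Fin (k-1) → KHypergraph α} {vr : Fin (k-1) → α}

open Classical in
/-- the swap function for the pairing argument -/
noncomputable def rho (H : Fin (k-1) → KHypergraph α) (vr : Fin (k-1) → α)
    (s : ℕ) (wk : α) (wi : Fin (k-1) → α) (a b : α) : α :=
  if h : ∃ i : Fin (k-1), (i : ℕ) < s ∧ a ∈ Hp H vr i then
    (if b = wi h.choose then wk else if b = wk then wi h.choose else b)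
  else b

variable {s : ℕ} {wk : α} {wi : Fin (k-1) → α}

theorem rho_of_not {a : α} (h : ∀ i : Fin (k-1), (i : ℕ) < s → a ∉ Hp H vr i) (b : α) :
    rho H vr s wk wi a b = b := by
  rw [rho, dif_neg]
  push_neg
  exact h

theorem rho_of_mem (hdisj2 : ∀ i j : Fin (k-1), i ≠ j → Disjoint (H i).verts (H j).verts)
    {a : α} {i : Fin (k-1)} (hi : a ∈ Hp H vr i) (his : (i : ℕ) < s) (b : α) :
    rho H vr s wk wi a b = if b = wi i then wk else if b = wk then wi i else b := by
  have hex : ∃ i : Fin (k-1), (i : ℕ) < s ∧ a ∈ Hp H vr i := ⟨i, his, hi⟩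
  have hch : hex.choose = i := Hp_unique hdisj2 hex.choose_spec.2 hi
  rw [rho, dif_pos hex, hch]

end Rho

section Pendant

variable {α : Type} [DecidableEq α] {k : ℕ} {G : KHypergraph α} {w : Fin k → α}
variable (hk : 2 ≤ k)
variable (hgood : G.Good) (hconn : G.Connected) (hunif : G.Uniform k)
  (hwinj : Function.Injective w)
  (hemem : Finset.univ.image w ∈ G.edges)

include hk hwinj hemem in
theorem unique_edge
    (hpend1 : ∀ i : Fin k, i ≠ ⟨k - 1, by omega⟩ → G.degree (w i) = 1)
    {f : Finset α} (hf : f ∈ G.edges) {m : Fin k} (hm : m ≠ ⟨k - 1, by omega⟩)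
    (hmf : w m ∈ f) : f = Finset.univ.image w := by
  have h1 := hpend1 m hm
  rw [degree, Finset.card_eq_one] at h1
  rcases h1 with ⟨x, hx⟩
  have he : Finset.univ.image w ∈ G.edges.filter (fun e => w m ∈ e) :=
    Finset.mem_filter.mpr ⟨hemem, Finset.mem_image_of_mem w (Finset.mem_univ m)⟩
  have hf' : f ∈ G.edges.filter (fun e => w m ∈ e) := Finset.mem_filter.mpr ⟨hf, hmf⟩
  rw [hx, Finset.mem_singleton] at he hf'
  rw [hf', he]

include hk hwinj hemem in
theorem pendant_walk_lb
    (hpend1 : ∀ i : Fin k, i ≠ ⟨k - 1, by omega⟩ → G.degree (w i) = 1)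
    {y : α} {u : α} {p : ℕ} (hw : G.Walk u y p) :
    y ∉ Finset.univ.image w → u ∈ Finset.univ.image w → u ≠ w ⟨k - 1, by omega⟩ →
      G.dist (w ⟨k - 1, by omega⟩) y + 1 ≤ p := by
  induction hw with
  | nil v => exact fun hy h1 _ => absurd h1 hy
  | cons v f hf hu0 hv0 hne hw ih =>
    intro hy h1 h2
    rcases Finset.mem_image.mp h1 with ⟨m, -, rfl⟩
    have hm : m ≠ ⟨k - 1, by omega⟩ := fun h => h2 (by rw [h])
    have hfe : f = Finset.univ.image w := unique_edge hk hwinj hemem hpend1 hf hm hu0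
    rcases eq_or_ne v (w ⟨k - 1, by omega⟩) with rfl | hvne
    · have := dist_le hw
      omega
    · have hvmem : v ∈ Finset.univ.image w := hfe ▸ hv0
      have := ih hy hvmem hvne
      omega

include hk hgood hconn hwinj hemem in
theorem dist_pendant
    (hpend1 : ∀ i : Fin k, i ≠ ⟨k - 1, by omega⟩ → G.degree (w i) = 1)
    {m : Fin k} (hm : m ≠ ⟨k - 1, by omega⟩) {y : α} (hyv : y ∈ G.verts)
    (hy : y ∉ Finset.univ.image w) :
    G.dist (w m) y = G.dist (w ⟨k - 1, by omega⟩) y + 1 := by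
  have hwm : w m ∈ G.verts :=
    hgood _ hemem (Finset.mem_image_of_mem w (Finset.mem_univ m))
  have hwk : w ⟨k - 1, by omega⟩ ∈ G.verts :=
    hgood _ hemem (Finset.mem_image_of_mem w (Finset.mem_univ _))
  have hge := pendant_walk_lb hk hwinj hemem hpend1
    (walk_of_nonempty (hconn (w m) hwm y hyv)) hy
    (Finset.mem_image_of_mem w (Finset.mem_univ m)) (fun h => hm (hwinj h))
  have hle : G.dist (w m) y ≤ G.dist (w ⟨k - 1, by omega⟩) y + 1 :=
    dist_le (Walk.cons _ (Finset.univ.image w) hemem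
      (Finset.mem_image_of_mem w (Finset.mem_univ m))
      (Finset.mem_image_of_mem w (Finset.mem_univ _))
      (fun h => hm (hwinj h)) (walk_of_nonempty (hconn _ hwk y hyv)))
  omega

include hk hgood hunif hwinj hemem in
theorem exists_outside
    (hpend1 : ∀ i : Fin k, i ≠ ⟨k - 1, by omega⟩ → G.degree (w i) = 1)
    (hpend2 : 2 ≤ G.degree (w ⟨k - 1, by omega⟩)) :
    ∃ y ∈ G.verts, y ∉ Finset.univ.image w := by
  set e : Finset α := Finset.univ.image w with he
  have hemem' : e ∈ G.edges.filter (fun f => w ⟨k - 1, by omega⟩ ∈ f) :=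
    Finset.mem_filter.mpr ⟨hemem, Finset.mem_image_of_mem w (Finset.mem_univ _)⟩
  have hcard : 1 < (G.edges.filter (fun f => w ⟨k - 1, by omega⟩ ∈ f)).card := hpend2
  obtain ⟨e', he'mem, he'ne⟩ := Finset.exists_mem_ne hcard e
  have he'edge : e' ∈ G.edges := (Finset.mem_filter.mp he'mem).1
  have hwke' : w ⟨k - 1, by omega⟩ ∈ e' := (Finset.mem_filter.mp he'mem).2
  have hcard' : 1 < e'.card := by rw [hunif e' he'edge]; omega
  obtain ⟨z, hz, hzne⟩ := Finset.exists_mem_ne hcard' (w ⟨k - 1, by omega⟩)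
  refine ⟨z, hgood e' he'edge hz, fun hze => ?_⟩
  rcases Finset.mem_image.mp hze with ⟨m, -, rfl⟩
  have hm : m ≠ ⟨k - 1, by omega⟩ := fun h => hzne (by rw [h])
  have h1 := hpend1 m hm
  rw [degree] at h1
  have h2 : 1 < (G.edges.filter (fun f => w m ∈ f)).card := by
    apply Finset.one_lt_card.mpr
    exact ⟨e', Finset.mem_filter.mpr ⟨he'edge, hz⟩, e,
      Finset.mem_filter.mpr ⟨hemem, Finset.mem_image_of_mem w (Finset.mem_univ m)⟩, he'ne⟩
  omega

end Pendant

theorem sum_add_two_le {β : Type*} [DecidableEq β] {P : Finset β} {f g : β → ℕ}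
    {p1 p2 : β} (h1 : p1 ∈ P) (h2 : p2 ∈ P) (hne : p1 ≠ p2)
    (hle : ∀ p ∈ P, f p ≤ g p) (hs1 : f p1 + 1 ≤ g p1) (hs2 : f p2 + 1 ≤ g p2) :
    (∑ p ∈ P, f p) + 2 ≤ ∑ p ∈ P, g p := by
  have h2' : p2 ∈ P.erase p1 := Finset.mem_erase.mpr ⟨hne.symm, h2⟩
  have key : ∀ h : β → ℕ, ∑ p ∈ P, h p =
      h p1 + (h p2 + ∑ p ∈ (P.erase p1).erase p2, h p) := by
    intro h
    rw [← Finset.add_sum_erase _ h h1, ← Finset.add_sum_erase _ h h2']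
  rw [key f, key g]
  have hrest : ∑ p ∈ (P.erase p1).erase p2, f p ≤ ∑ p ∈ (P.erase p1).erase p2, g p :=
    Finset.sum_le_sum fun p hp =>
      hle p (Finset.mem_of_mem_erase (Finset.mem_of_mem_erase hp))
  omega

end HGAux
open HGAux

/-- Lemma `cycle-min-moving1`: Let `G` be a connected `k`-uniform hypergraph
with at least two edges and a pendant edge `e = {w 0, …, w (k-1)}` at `w (k-1)`, and let
`H 0, …, H (k-2)` be vertex-disjoint connected `k`-uniform hypergraphs (disjoint from `G`)
with roots `vr i ∈ V(H i)`. If some `H j` has at least one edge, then for every `s` with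
(0-based) `↑j + 1 ≤ s ≤ k - 1` we have `σ(G_{e,0}) > σ(G_{e,s})`. -/
theorem stmt7 {α : Type} [DecidableEq α] (k : ℕ) (hk : 2 ≤ k) (G : KHypergraph α)
    (hgood : G.Good) (hconn : G.Connected) (hunif : G.Uniform k)
    (hsize : 2 ≤ G.edges.card)
    (w : Fin k → α) (hwinj : Function.Injective w)
    (hemem : Finset.univ.image w ∈ G.edges)
    (hpend1 : ∀ i : Fin k, i ≠ ⟨k - 1, by omega⟩ → G.degree (w i) = 1)
    (hpend2 : 2 ≤ G.degree (w ⟨k - 1, by omega⟩))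
    (H : Fin (k - 1) → KHypergraph α) (vr : Fin (k - 1) → α)
    (hH : ∀ i, (H i).Good ∧ (H i).Connected ∧ (H i).Uniform k ∧ vr i ∈ (H i).verts)
    (hdisj1 : ∀ i, Disjoint (H i).verts G.verts)
    (hdisj2 : ∀ i j, i ≠ j → Disjoint (H i).verts (H j).verts)
    (j : Fin (k - 1)) (hj : (H j).edges.Nonempty) :
    ∀ s : ℕ, (j : ℕ) + 1 ≤ s → s ≤ k - 1 →
      (Ges G k hk w H vr 0).trans > (Ges G k hk w H vr s).trans := by
  intro s hs1 hs2
  classical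
  have hk1 : k - 1 < k := by omega
  set wK : α := w ⟨k - 1, hk1⟩ with hwK
  set wi : Fin (k-1) → α := fun i => w (Fin.castLE (Nat.sub_le k 1) i) with hwi
  set tA : Fin (k-1) → α := fun i => if (i : ℕ) < 0 then wK else wi i with htA
  set tB : Fin (k-1) → α := fun i => if (i : ℕ) < s then wK else wi i with htB
  have hGA : Ges G k hk w H vr 0 = UU G H vr tA := by rw [htA, hwK, hwi]; rfl
  have hGB : Ges G k hk w H vr s = UU G H vr tB := by rw [htB, hwK, hwi]; rfl
  have hroot : ∀ i, vr i ∈ (H i).verts := fun i => (hH i).2.2.2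
  have hwv : ∀ m : Fin k, w m ∈ G.verts :=
    fun m => hgood _ hemem (Finset.mem_image_of_mem w (Finset.mem_univ m))
  have hwKv : wK ∈ G.verts := hwv _
  have hwiv : ∀ i, wi i ∈ G.verts := fun i => hwv _
  have htAv : ∀ i, tA i ∈ G.verts := fun i => by
    rw [htA]; dsimp only; split_ifs; exacts [hwKv, hwiv i]
  have htBv : ∀ i, tB i ∈ G.verts := fun i => by
    rw [htB]; dsimp only; split_ifs; exacts [hwKv, hwiv i]
  have htAe : ∀ i, tA i = wi i := fun i => by rw [htA]; simp
  have htBlt : ∀ i : Fin (k-1), (i : ℕ) < s → tB i = wK := fun i hi => by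
    rw [htB]; simp [hi]
  have htBge : ∀ i : Fin (k-1), ¬ (i : ℕ) < s → tB i = wi i := fun i hi => by
    rw [htB]; simp [hi]
  have hwKwi : ∀ i, wK ≠ wi i := by
    intro i h
    have h2 := hwinj h
    have h3 : (k - 1 : ℕ) = ((Fin.castLE (Nat.sub_le k 1) i : Fin k) : ℕ) :=
      congrArg Fin.val h2
    rw [Fin.coe_castLE] at h3
    have := i.isLt
    omega
  have hwi_inj : ∀ i m, wi i = wi m → i = m := fun i m h =>
    Fin.castLE_injective _ (hwinj h)
  have hwie : ∀ i, wi i ∈ Finset.univ.image w :=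
    fun i => Finset.mem_image_of_mem w (Finset.mem_univ _)
  have hwKe : wK ∈ Finset.univ.image w := Finset.mem_image_of_mem w (Finset.mem_univ _)
  have d1 : ∀ a b : α, a ∈ Finset.univ.image w → b ∈ Finset.univ.image w → a ≠ b →
      G.dist a b = 1 := fun a b ha hb hab => dist_eq_one hconn hgood hemem ha hb hab
  have hnotG : ∀ {u : α} {i : Fin (k-1)}, u ∈ Hp H vr i → u ∉ G.verts :=
    fun {u i} hui hG => not_mem_Hp hdisj1 hG i hui
  -- distance from a pendant vertex
  have hdp : ∀ (i : Fin (k-1)) {y : α}, y ∈ G.verts → y ∉ Finset.univ.image w →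
      G.dist (wi i) y = G.dist wK y + 1 := by
    intro i y hyv hy
    rw [hwi, hwK]
    exact dist_pendant hk hgood hconn hwinj hemem hpend1
      (fun h => by
        have h3 : ((Fin.castLE (Nat.sub_le k 1) i : Fin k) : ℕ) = (k - 1 : ℕ) :=
          congrArg Fin.val h
        rw [Fin.coe_castLE] at h3
        have := i.isLt
        omega) hyv hy
  -- the vertex set
  set V : Finset α := VV G H vr with hV
  have hGsub : G.verts ⊆ V := Finset.subset_union_left
  have hHpsub : ∀ {i : Fin (k-1)} {a : α}, a ∈ Hp H vr i → a ∈ V := fun {i a} ha =>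
    Finset.mem_union_right _ (Finset.mem_biUnion.mpr ⟨i, Finset.mem_univ i, ha⟩)
  -- the swap map
  set r : α → α → α := rho H vr s wK wi with hr
  have hrG : ∀ {a : α}, a ∈ G.verts → ∀ b, r a b = b := fun {a} ha b =>
    rho_of_not (fun i _ => not_mem_Hp hdisj1 ha i) b
  have hrge : ∀ {a : α} {i : Fin (k-1)}, a ∈ Hp H vr i → ¬ (i : ℕ) < s →
      ∀ b, r a b = b := fun {a i} hai his b =>
    rho_of_not (fun i' hi' hmem => his ((Hp_unique hdisj2 hmem hai) ▸ hi')) b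
  have hrmem' : ∀ {a : α} {i : Fin (k-1)}, a ∈ Hp H vr i → (i : ℕ) < s → ∀ b,
      r a b = if b = wi i then wK else if b = wK then wi i else b :=
    fun {a i} hai his b => rho_of_mem hdisj2 hai his b
  have hrnotG : ∀ a {b : α}, b ∉ G.verts → r a b = b := by
    intro a b hb
    rw [hr, rho]
    split_ifs with h1 h2 h3
    · exact absurd (h2 ▸ hwiv _) hb
    · exact absurd (h3 ▸ hwKv) hb
    · rfl
    · rfl
  have hrVV : ∀ (a : α) {b : α}, b ∈ V → r a b ∈ V := by
    intro a b hb
    rw [hr, rho]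
    split_ifs
    · exact hGsub hwKv
    · exact hGsub (hwiv _)
    · exact hb
    · exact hb
  -- involution
  have hinv : ∀ u ∈ V, ∀ v ∈ V, r (r v u) (r u v) = v := by
    intro u hu v hv
    rcases Finset.mem_union.mp hu with huG | huH
    · have h1 : r u v = v := hrG huG _
      have h2 : r v u ∈ G.verts := by
        rw [hr, rho]
        split_ifs
        · exact hwKv
        · exact hwiv _
        · exact huG
        · exact huG
      rw [h1, hrG h2]
    · rcases Finset.mem_biUnion.mp huH with ⟨i, -, hui⟩
      have h2 : r v u = u := by
        rcases Finset.mem_union.mp hv with hvG | hvH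
        · exact hrG hvG _
        · exact hrnotG _ (hnotG hui)
      rw [h2]
      by_cases his : (i : ℕ) < s
      · rw [hrmem' hui his v]
        by_cases hv1 : v = wi i
        · rw [if_pos hv1, hrmem' hui his, if_neg (hwKwi i), if_pos rfl, hv1]
        · by_cases hv2 : v = wK
          · rw [if_neg hv1, if_pos hv2, hrmem' hui his, if_pos rfl, hv2]
          · rw [if_neg hv1, if_neg hv2, hrmem' hui his, if_neg hv1, if_neg hv2]
      · rw [hrge hui his, hrge hui his]
  -- pointwise inequality, main half
  have keyHalf : ∀ u ∈ V, ∀ v ∈ V, ¬(u ∈ G.verts ∧ ¬ v ∈ G.verts) →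
      cd G H vr tB (r v u) (r u v) ≤ cd G H vr tA u v := by
    intro u hu v hv hcase
    rcases Finset.mem_union.mp hu with huG | huH
    · have hvG : v ∈ G.verts := by
        by_contra hvn
        exact hcase ⟨huG, hvn⟩
      rw [hrG hvG u, hrG huG v, cd_GG hdisj1 huG hvG, cd_GG hdisj1 huG hvG]
    · rcases Finset.mem_biUnion.mp huH with ⟨i, -, hui⟩
      have h2 : r v u = u := by
        rcases Finset.mem_union.mp hv with hvG | hvH
        · exact hrG hvG _
        · exact hrnotG _ (hnotG hui)
      rw [h2]
      rcases Finset.mem_union.mp hv with hvG | hvH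
      · -- v in G
        by_cases his : (i : ℕ) < s
        · rw [hrmem' hui his v]
          by_cases hv1 : v = wi i
          · rw [if_pos hv1, hv1, cd_HG hdisj1 hdisj2 hui hwKv,
              cd_HG hdisj1 hdisj2 hui (hwiv i), htBlt i his, htAe i,
              HGAux.dist_self, HGAux.dist_self]
          · by_cases hv2 : v = wK
            · rw [if_neg hv1, if_pos hv2, hv2, cd_HG hdisj1 hdisj2 hui (hwiv i),
                cd_HG hdisj1 hdisj2 hui hwKv, htBlt i his, htAe i,
                d1 _ _ hwKe (hwie i) (hwKwi i), d1 _ _ (hwie i) hwKe (Ne.symm (hwKwi i))]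
            · rw [if_neg hv1, if_neg hv2, cd_HG hdisj1 hdisj2 hui hvG,
                cd_HG hdisj1 hdisj2 hui hvG, htBlt i his, htAe i]
              by_cases hve : v ∈ Finset.univ.image w
              · rw [d1 _ _ hwKe hve (fun h => hv2 h.symm),
                  d1 _ _ (hwie i) hve (fun h => hv1 h.symm)]
              · have := hdp i hvG hve
                omega
        · rw [hrge hui his v, cd_HG hdisj1 hdisj2 hui hvG,
            cd_HG hdisj1 hdisj2 hui hvG, htBge i his, htAe i]
      · -- v in some Hp m
        rcases Finset.mem_biUnion.mp hvH with ⟨m, -, hvm⟩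
        have h3 : r u v = v := hrnotG _ (hnotG hvm)
        rw [h3]
        rcases eq_or_ne i m with rfl | him
        · rw [cd_HH_same hdisj2 hui hvm, cd_HH_same hdisj2 hui hvm]
        · rw [cd_HH_ne hdisj2 him hui hvm, cd_HH_ne hdisj2 him hui hvm,
            htAe i, htAe m, d1 _ _ (hwie i) (hwie m)
              (fun h => him (hwi_inj i m h))]
          have hle1 : G.dist (tB i) (tB m) ≤ 1 := by
            by_cases his : (i : ℕ) < s <;> by_cases hms : (m : ℕ) < s
            · rw [htBlt i his, htBlt m hms, HGAux.dist_self]; omega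
            · rw [htBlt i his, htBge m hms]
              rw [d1 _ _ hwKe (hwie m) (hwKwi m)]
            · rw [htBge i his, htBlt m hms]
              rw [d1 _ _ (hwie i) hwKe (Ne.symm (hwKwi i))]
            · rw [htBge i his, htBge m hms]
              rw [d1 _ _ (hwie i) (hwie m) (fun h => him (hwi_inj i m h))]
          omega
  -- cd symmetry
  have cdsymm : ∀ (t' : Fin (k-1) → α), (∀ i, t' i ∈ G.verts) →
      ∀ u ∈ V, ∀ v ∈ V, cd G H vr t' u v = cd G H vr t' v u := by
    intro t' ht' u hu v hv
    rcases Finset.mem_union.mp hu with huG | huH <;>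
      rcases Finset.mem_union.mp hv with hvG | hvH
    · rw [cd_GG hdisj1 huG hvG, cd_GG hdisj1 hvG huG, dist_symm hconn huG hvG]
    · rcases Finset.mem_biUnion.mp hvH with ⟨m, -, hvm⟩
      rw [cd_GH hdisj1 hdisj2 huG hvm, cd_HG hdisj1 hdisj2 hvm huG,
        dist_symm hconn huG (ht' m)]
      omega
    · rcases Finset.mem_biUnion.mp huH with ⟨i, -, hui⟩
      rw [cd_HG hdisj1 hdisj2 hui hvG, cd_GH hdisj1 hdisj2 hvG hui,
        dist_symm hconn (ht' i) hvG]
      omega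
    · rcases Finset.mem_biUnion.mp huH with ⟨i, -, hui⟩
      rcases Finset.mem_biUnion.mp hvH with ⟨m, -, hvm⟩
      rcases eq_or_ne i m with rfl | him
      · rw [cd_HH_same hdisj2 hui hvm, cd_HH_same hdisj2 hvm hui,
          dist_symm (hH i).2.1 (mem_Hp.mp hui).2 (mem_Hp.mp hvm).2]
      · rw [cd_HH_ne hdisj2 him hui hvm, cd_HH_ne hdisj2 him.symm hvm hui,
          dist_symm hconn (ht' i) (ht' m)]
        omega
  -- full pointwise inequality
  have key : ∀ u ∈ V, ∀ v ∈ V, cd G H vr tB (r v u) (r u v) ≤ cd G H vr tA u v := by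
    intro u hu v hv
    by_cases hcase : u ∈ G.verts ∧ ¬ v ∈ G.verts
    · rw [cdsymm tB htBv _ (hrVV v hu) _ (hrVV u hv), cdsymm tA htAv u hu v hv]
      exact keyHalf v hv u hu (fun ⟨h1, _⟩ => hcase.2 h1)
    · exact keyHalf u hu v hv hcase
  -- strict pairs
  obtain ⟨f0, hf0⟩ := hj
  have hf0card : 1 < f0.card := by rw [(hH j).2.2.1 f0 hf0]; omega
  obtain ⟨x0, hx0f, hx0ne⟩ := Finset.exists_mem_ne hf0card (vr j)
  have hx0 : x0 ∈ Hp H vr j := mem_Hp.mpr ⟨hx0ne, (hH j).1 f0 hf0 hx0f⟩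
  obtain ⟨y0, hy0v, hy0e⟩ := exists_outside hk hgood hunif hwinj hemem hpend1 hpend2
  have hjs : (j : ℕ) < s := by omega
  have hx0V : x0 ∈ V := hHpsub hx0
  have hy0V : y0 ∈ V := hGsub hy0v
  have hy0wi : y0 ≠ wi j := fun h => hy0e (h ▸ hwie j)
  have hy0wK : y0 ≠ wK := fun h => hy0e (h ▸ hwKe)
  have hrx0y0 : r x0 y0 = y0 := by
    rw [hrmem' hx0 hjs y0, if_neg hy0wi, if_neg hy0wK]
  have hry0x0 : r y0 x0 = x0 := hrG hy0v x0
  have strict1 : cd G H vr tB (r y0 x0) (r x0 y0) + 1 ≤ cd G H vr tA x0 y0 := by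
    rw [hrx0y0, hry0x0, cd_HG hdisj1 hdisj2 hx0 hy0v, cd_HG hdisj1 hdisj2 hx0 hy0v,
      htBlt j hjs, htAe j]
    have := hdp j hy0v hy0e
    omega
  have strict2 : cd G H vr tB (r x0 y0) (r y0 x0) + 1 ≤ cd G H vr tA y0 x0 := by
    rw [hrx0y0, hry0x0, cd_GH hdisj1 hdisj2 hy0v hx0, cd_GH hdisj1 hdisj2 hy0v hx0,
      htBlt j hjs, htAe j, dist_symm hconn hy0v hwKv, dist_symm hconn hy0v (hwiv j)]
    have := hdp j hy0v hy0e
    omega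
  -- transmission formula
  have htrans : ∀ (t' : Fin (k-1) → α), (∀ i, t' i ∈ G.verts) →
      (UU G H vr t').trans = (∑ p ∈ V ×ˢ V, cd G H vr t' p.1 p.2) / 2 := by
    intro t' ht'
    unfold KHypergraph.trans
    rw [verts_UU hroot ht', ← hV, Finset.sum_product]
    congr 1
    exact Finset.sum_congr rfl fun u hu => Finset.sum_congr rfl fun v hv =>
      dist_UU hgood hconn hH hdisj1 hdisj2 ht' u hu v hv
  -- reindex by the involution
  have hreindex : ∑ p ∈ V ×ˢ V, cd G H vr tB p.1 p.2
      = ∑ p ∈ V ×ˢ V, cd G H vr tB (r p.2 p.1) (r p.1 p.2) := by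
    refine Finset.sum_nbij' (fun p => (r p.2 p.1, r p.1 p.2))
      (fun p => (r p.2 p.1, r p.1 p.2)) ?_ ?_ ?_ ?_ ?_
    · intro p hp
      rcases Finset.mem_product.mp hp with ⟨h1, h2⟩
      exact Finset.mem_product.mpr ⟨hrVV _ h1, hrVV _ h2⟩
    · intro p hp
      rcases Finset.mem_product.mp hp with ⟨h1, h2⟩
      exact Finset.mem_product.mpr ⟨hrVV _ h1, hrVV _ h2⟩
    · intro p hp
      rcases Finset.mem_product.mp hp with ⟨h1, h2⟩
      have e1 := hinv p.2 h2 p.1 h1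
      have e2 := hinv p.1 h1 p.2 h2
      exact Prod.ext e1 e2
    · intro p hp
      rcases Finset.mem_product.mp hp with ⟨h1, h2⟩
      have e1 := hinv p.2 h2 p.1 h1
      have e2 := hinv p.1 h1 p.2 h2
      exact Prod.ext e1 e2
    · intro p hp
      rcases Finset.mem_product.mp hp with ⟨h1, h2⟩
      rw [hinv p.2 h2 p.1 h1, hinv p.1 h1 p.2 h2]
  -- the sum inequality
  have hSS : (∑ p ∈ V ×ˢ V, cd G H vr tB p.1 p.2) + 2
      ≤ ∑ p ∈ V ×ˢ V, cd G H vr tA p.1 p.2 := by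
    rw [hreindex]
    refine sum_add_two_le (p1 := (x0, y0)) (p2 := (y0, x0))
      (Finset.mem_product.mpr ⟨hx0V, hy0V⟩) (Finset.mem_product.mpr ⟨hy0V, hx0V⟩)
      ?_ ?_ strict1 strict2
    · intro h
      have : x0 = y0 := congrArg Prod.fst h
      exact hnotG hx0 (this ▸ hy0v)
    · intro p hp
      rcases Finset.mem_product.mp hp with ⟨h1, h2⟩
      exact key p.1 h1 p.2 h2
  rw [hGA, hGB, htrans tA htAv, htrans tB htBv]
  omega
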